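/- For all a, b ∈ Z, the weight wt(a,b) = |b| if and only if one of the following holds: (1) a = b = 0; (2) b > 0, a is even, and a ≤ -b(b-1); (3) b < 0, a + b is even, and a ≥ b². -/

import Mathlib

open Finset

-- core: sum of n distinct naturals is at least 0+1+...+(n-1)
lemma core_sum (T : Finset ℕ) : ∑ i ∈ range T.card, i ≤ ∑ i ∈ T, i := by
  induction T using Finset.strongInduction with
  | _ T ih =>
    rcases T.eq_empty_or_nonempty with rfl | hne
    · simp
    · have hM : T.max' hne ∈ T := T.max'_mem hne
      have hcard : T.card = (T.erase (T.max' hne)).card + 1 := by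
        rw [Finset.card_erase_of_mem hM]
        have := Finset.card_pos.mpr hne
        omega
      have hsub : T ⊆ range (T.max' hne + 1) := by
        intro x hx
        simp only [mem_range]
        exact Nat.lt_succ_of_le (Finset.le_max' T x hx)
      have hcle : T.card ≤ T.max' hne + 1 := by
        simpa using Finset.card_le_card hsub
      have h1 := ih (T.erase (T.max' hne)) (Finset.erase_ssubset hM)
      have h2 : ∑ i ∈ T, i = T.max' hne + ∑ i ∈ T.erase (T.max' hne), i :=
        (Finset.add_sum_erase T id hM).symm
      rw [hcard, Finset.sum_range_succ, h2]
      have : (T.erase (T.max' hne)).card ≤ T.max' hne := by omega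
      omega

lemma even_sum_ge (S : Finset ℕ) (h : ∀ i ∈ S, Even i) :
    S.card * (S.card - 1) ≤ ∑ i ∈ S, i := by
  have hinj : Set.InjOn (· / 2) S := by
    intro i hi j hj hij
    obtain ⟨x, hx⟩ := h i hi
    obtain ⟨y, hy⟩ := h j hj
    simp only at hij
    omega
  have hcard : (S.image (· / 2)).card = S.card := Finset.card_image_of_injOn hinj
  have hsum : ∑ i ∈ S, i = 2 * ∑ t ∈ S.image (· / 2), t := by
    rw [Finset.sum_image hinj, Finset.mul_sum]
    refine Finset.sum_congr rfl fun i hi => ?_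
    obtain ⟨x, hx⟩ := h i hi
    omega
  have hc := core_sum (S.image (· / 2))
  rw [hcard] at hc
  have h2 : (∑ i ∈ range S.card, i) * 2 = S.card * (S.card - 1) :=
    Finset.sum_range_id_mul_two _
  omega

lemma odd_sum_ge (S : Finset ℕ) (h : ∀ i ∈ S, Odd i) :
    S.card * S.card ≤ ∑ i ∈ S, i := by
  have hinj : Set.InjOn (· / 2) S := by
    intro i hi j hj hij
    obtain ⟨x, hx⟩ := h i hi
    obtain ⟨y, hy⟩ := h j hj
    simp only at hij
    omega
  have hcard : (S.image (· / 2)).card = S.card := Finset.card_image_of_injOn hinj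
  have hsum : ∑ i ∈ S, i = 2 * (∑ t ∈ S.image (· / 2), t) + S.card := by
    rw [Finset.sum_image hinj, Finset.mul_sum]
    have : ∑ i ∈ S, i = ∑ i ∈ S, (2 * (i / 2) + 1) := by
      refine Finset.sum_congr rfl fun i hi => ?_
      obtain ⟨x, hx⟩ := h i hi
      omega
    rw [this, Finset.sum_add_distrib, Finset.sum_const, smul_eq_mul, mul_one]
  have hc := core_sum (S.image (· / 2))
  rw [hcard] at hc
  have h2 : (∑ i ∈ range S.card, i) * 2 = S.card * (S.card - 1) :=
    Finset.sum_range_id_mul_two _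
  have h3 : S.card * S.card = S.card * (S.card - 1) + S.card := by
    cases hn : S.card with
    | zero => rfl
    | succ n => simp [Nat.succ_sub_one]; ring
  omega


/-- The Jordan block `[[-1,1],[0,-1]]`. -/
def M2 : Matrix (Fin 2) (Fin 2) ℤ := !![-1, 1; 0, -1]

/-- The digit `p = (0,1)ᵀ`. -/
def pd : Fin 2 → ℤ := ![0, 1]

/-- The zero digit `z = (0,0)ᵀ`. -/
def zd : Fin 2 → ℤ := ![0, 0]

/-- The vector represented by the word `d_{k-1} … d_0`, namely `∑ M^i d_i`. -/
def val2 {k : ℕ} (d : Fin k → (Fin 2 → ℤ)) : Fin 2 → ℤ :=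
  ∑ i : Fin k, (M2 ^ (i : ℕ)).mulVec (d i)

/-- The set of weights (numbers of nonzero digits) of representations of `(a,b)ᵀ`
in base `M2` with digits `{p, z}`. -/
def RepWeights (a b : ℤ) : Set ℕ :=
  {w : ℕ | ∃ (k : ℕ) (d : Fin k → (Fin 2 → ℤ)),
    (∀ i, d i = pd ∨ d i = zd) ∧ val2 d = ![a, b] ∧
    (Finset.univ.filter (fun i : Fin k => d i = pd)).card = w}

lemma M2_pow (n : ℕ) : M2 ^ n = !![(-1)^n, (-1)^(n+1) * (n:ℤ); 0, (-1)^n] := by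
  induction n with
  | zero => simp [Matrix.one_fin_two]
  | succ n ih =>
    rw [pow_succ, ih, M2]
    rw [Matrix.mul_fin_two]
    congr 1 <;> push_cast <;> ring

lemma mulVec_pd (n : ℕ) : (M2 ^ n).mulVec pd = ![(-1)^(n+1) * (n:ℤ), (-1)^n] := by
  rw [M2_pow]
  funext i
  fin_cases i <;> simp [Matrix.mulVec, dotProduct, pd, Fin.sum_univ_two]

lemma mulVec_zd (n : ℕ) : (M2 ^ n).mulVec zd = 0 := by
  funext i
  simp [Matrix.mulVec, dotProduct, zd, Fin.sum_univ_two]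

def wA (S : Finset ℕ) : ℤ := ∑ i ∈ S, (-1) ^ (i + 1) * (i : ℤ)
def wB (S : Finset ℕ) : ℤ := ∑ i ∈ S, (-1) ^ i

lemma pd_ne_zd : pd ≠ zd := by
  intro h
  have := congrFun h 1
  simp [pd, zd] at this


lemma val2_filter {k : ℕ} (d : Fin k → (Fin 2 → ℤ)) (hd : ∀ i, d i = pd ∨ d i = zd) (j : Fin 2) :
    val2 d j = ∑ i ∈ Finset.univ.filter (fun i : Fin k => d i = pd),
      ((M2 ^ (i : ℕ)).mulVec pd) j := by
  have h1 : val2 d = ∑ i ∈ Finset.univ.filter (fun i : Fin k => d i = pd),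
      (M2 ^ (i : ℕ)).mulVec (d i) := by
    rw [val2]
    refine (Finset.sum_subset (Finset.subset_univ _) fun i _ hi => ?_).symm
    have : d i = zd := by
      rcases hd i with h | h
      · exact absurd (Finset.mem_filter.mpr ⟨Finset.mem_univ i, h⟩) hi
      · exact h
    rw [this, mulVec_zd]
  rw [h1, Finset.sum_apply]
  refine Finset.sum_congr rfl fun i hi => ?_
  rw [(Finset.mem_filter.mp hi).2]

lemma mem_repWeights (a b : ℤ) (w : ℕ) :
    w ∈ RepWeights a b ↔ ∃ S : Finset ℕ, S.card = w ∧ wA S = a ∧ wB S = b := by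
  constructor
  · rintro ⟨k, d, hd, hv, hc⟩
    set F := Finset.univ.filter (fun i : Fin k => d i = pd) with hF
    have hA0 : ∑ i ∈ F, ((M2 ^ (i : ℕ)).mulVec pd) 0 = a := by
      have := val2_filter d hd 0
      rw [hv] at this
      simpa using this.symm
    have hB0 : ∑ i ∈ F, ((M2 ^ (i : ℕ)).mulVec pd) 1 = b := by
      have := val2_filter d hd 1
      rw [hv] at this
      simpa using this.symm
    refine ⟨F.image Fin.val, ?_, ?_, ?_⟩
    · rw [Finset.card_image_of_injective _ Fin.val_injective, hc]
    · rw [wA, Finset.sum_image (fun i _ j _ h => Fin.val_injective h), ← hA0]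
      refine Finset.sum_congr rfl fun i hi => ?_
      rw [mulVec_pd]
      simp
    · rw [wB, Finset.sum_image (fun i _ j _ h => Fin.val_injective h), ← hB0]
      refine Finset.sum_congr rfl fun i hi => ?_
      rw [mulVec_pd]
      simp
  · rintro ⟨S, hcard, hA, hB⟩
    obtain ⟨k, hk⟩ := S.exists_nat_subset_range
    set d : Fin k → (Fin 2 → ℤ) := fun i => if (i : ℕ) ∈ S then pd else zd with hdd
    have hd : ∀ i, d i = pd ∨ d i = zd := by
      intro i
      rw [hdd]
      dsimp only
      split
      · exact Or.inl rfl
      · exact Or.inr rfl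
    have hmem : ∀ i : Fin k, d i = pd ↔ (i : ℕ) ∈ S := by
      intro i
      rw [hdd]
      dsimp only
      split
      next h => simp [h]
      next h => simp [h, Ne.symm pd_ne_zd]
    have hFS : (Finset.univ.filter (fun i : Fin k => d i = pd)).image Fin.val = S := by
      ext n
      simp only [Finset.mem_image, Finset.mem_filter, Finset.mem_univ, true_and]
      constructor
      · rintro ⟨i, hi, rfl⟩
        exact (hmem i).mp hi
      · intro hn
        have hnk : n < k := by simpa using hk hn
        exact ⟨⟨n, hnk⟩, (hmem ⟨n, hnk⟩).mpr hn, rfl⟩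
    have hsum : ∀ (g : ℕ → ℤ), ∑ i ∈ Finset.univ.filter (fun i : Fin k => d i = pd),
        g (i : ℕ) = ∑ n ∈ S, g n := by
      intro g
      rw [← hFS, Finset.sum_image (fun i _ j _ h => Fin.val_injective h)]
    refine ⟨k, d, hd, ?_, ?_⟩
    · funext j
      fin_cases j
      · show val2 d 0 = ![a, b] 0
        rw [val2_filter d hd 0]
        have : ∑ i ∈ Finset.univ.filter (fun i : Fin k => d i = pd),
            ((M2 ^ (i : ℕ)).mulVec pd) 0
            = ∑ i ∈ Finset.univ.filter (fun i : Fin k => d i = pd),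
              (-1) ^ ((i : ℕ) + 1) * ((i : ℕ) : ℤ) := by
          refine Finset.sum_congr rfl fun i hi => ?_
          rw [mulVec_pd]
          simp
        rw [this, hsum (fun n => (-1) ^ (n + 1) * (n : ℤ))]
        simpa [wA] using hA
      · show val2 d 1 = ![a, b] 1
        rw [val2_filter d hd 1]
        have : ∑ i ∈ Finset.univ.filter (fun i : Fin k => d i = pd),
            ((M2 ^ (i : ℕ)).mulVec pd) 1
            = ∑ i ∈ Finset.univ.filter (fun i : Fin k => d i = pd),
              (-1) ^ (i : ℕ) := by
          refine Finset.sum_congr rfl fun i hi => ?_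
          rw [mulVec_pd]
          simp
        rw [this, hsum (fun n => (-1) ^ n)]
        simpa [wB] using hB
    · rw [← hcard, ← hFS, Finset.card_image_of_injective _ Fin.val_injective]

lemma neg_one_pow_le_one (i : ℕ) : ((-1 : ℤ)) ^ i ≤ 1 := by
  rcases Nat.even_or_odd i with h | h
  · rw [h.neg_one_pow]
  · rw [h.neg_one_pow]; norm_num

lemma neg_one_pow_ge_neg_one (i : ℕ) : (-1 : ℤ) ≤ (-1 : ℤ) ^ i := by
  rcases Nat.even_or_odd i with h | h
  · rw [h.neg_one_pow]; norm_num
  · rw [h.neg_one_pow]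

lemma wB_abs_le (S : Finset ℕ) : |wB S| ≤ (S.card : ℤ) := by
  calc |wB S| ≤ ∑ i ∈ S, |(-1 : ℤ) ^ i| := Finset.abs_sum_le_sum_abs _ _
  _ = ∑ i ∈ S, 1 := by
      refine Finset.sum_congr rfl fun i _ => ?_
      rw [abs_pow]
      simp
  _ = (S.card : ℤ) := by simp

lemma all_even_of_wB (S : Finset ℕ) (h : wB S = (S.card : ℤ)) : ∀ i ∈ S, Even i := by
  have h0 : ∑ i ∈ S, (1 - (-1 : ℤ) ^ i) = 0 := by
    rw [Finset.sum_sub_distrib, ← wB]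
    simp [h]
  have h1 := (Finset.sum_eq_zero_iff_of_nonneg
    (fun i _ => by linarith [neg_one_pow_le_one i])).mp h0
  intro i hi
  have := h1 i hi
  have h2 : (-1 : ℤ) ^ i = 1 := by linarith
  exact (neg_one_pow_eq_one_iff_even (by norm_num)).mp h2

lemma all_odd_of_wB (S : Finset ℕ) (h : wB S = -(S.card : ℤ)) : ∀ i ∈ S, Odd i := by
  have h0 : ∑ i ∈ S, (1 + (-1 : ℤ) ^ i) = 0 := by
    rw [Finset.sum_add_distrib, ← wB]
    simp [h]
  have h1 := (Finset.sum_eq_zero_iff_of_nonneg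
    (fun i _ => by linarith [neg_one_pow_ge_neg_one i])).mp h0
  intro i hi
  have := h1 i hi
  have h2 : (-1 : ℤ) ^ i = -1 := by linarith
  rcases Nat.even_or_odd i with he | ho
  · rw [he.neg_one_pow] at h2; norm_num at h2
  · exact ho

lemma wA_of_even (S : Finset ℕ) (h : ∀ i ∈ S, Even i) : wA S = -∑ i ∈ S, (i : ℤ) := by
  rw [wA, ← Finset.sum_neg_distrib]
  refine Finset.sum_congr rfl fun i hi => ?_
  rw [pow_succ, (h i hi).neg_one_pow]
  ring

lemma wA_of_odd (S : Finset ℕ) (h : ∀ i ∈ S, Odd i) : wA S = ∑ i ∈ S, (i : ℤ) := by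
  rw [wA]
  refine Finset.sum_congr rfl fun i hi => ?_
  rw [pow_succ, (h i hi).neg_one_pow]
  ring

lemma sum_range_int (m : ℕ) : 2 * ∑ j ∈ range m, (j : ℤ) = m * (m - 1) := by
  induction m with
  | zero => simp
  | succ n ih =>
    rw [Finset.sum_range_succ, mul_add, ih]
    push_cast
    ring

lemma construct_pos (m : ℕ) (a : ℤ) (ha : Even a) (hle : a ≤ -(((m : ℤ) + 1) * m)) :
    ∃ S : Finset ℕ, S.card = m + 1 ∧ wA S = a ∧ wB S = (m : ℤ) + 1 := by
  set q : ℤ := (m : ℤ) with hq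
  set tz : ℤ := -a - q * (q - 1) with htz
  have hq0 : 0 ≤ q := Int.natCast_nonneg m
  have htz2 : 2 * q ≤ tz := by
    have : (q + 1) * q - q * (q - 1) = 2 * q := by ring
    omega
  have htznn : 0 ≤ tz := by omega
  have hEtz : Even tz := by
    have h1 : Even (q * (q - 1)) := by
      have := Int.even_mul_succ_self (q - 1)
      simpa [mul_comm] using this
    rcases ha with ⟨c, hc⟩
    rcases h1 with ⟨e, he⟩
    exact ⟨-c - e, by omega⟩
  set t : ℕ := tz.toNat with htdef
  have htc : (t : ℤ) = tz := Int.toNat_of_nonneg htznn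
  have hte : Even t := by
    rw [← Int.even_coe_nat, htc]
    exact hEtz
  have htm : 2 * m ≤ t := by omega
  set X : Finset ℕ := (range m).image (fun j => 2 * j) with hX
  have htX : t ∉ X := by
    rw [hX]
    simp only [Finset.mem_image, Finset.mem_range]
    rintro ⟨j, hj, hj2⟩
    omega
  have hinj : ∀ x ∈ range m, ∀ y ∈ range m, 2 * x = 2 * y → x = y := by
    intro x _ y _ h
    omega
  refine ⟨insert t X, ?_, ?_, ?_⟩
  · rw [Finset.card_insert_of_notMem htX, hX,
      Finset.card_image_of_injOn (fun x hx y hy h => hinj x hx y hy h), Finset.card_range]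
  · rw [wA, Finset.sum_insert htX, hX, Finset.sum_image hinj]
    have h1 : (-1 : ℤ) ^ (t + 1) * (t : ℤ) = -tz := by
      rw [pow_succ, hte.neg_one_pow, htc]
      ring
    have h2 : ∑ j ∈ range m, (-1 : ℤ) ^ (2 * j + 1) * ((2 * j : ℕ) : ℤ)
        = -(q * (q - 1)) := by
      have : ∀ j ∈ range m, (-1 : ℤ) ^ (2 * j + 1) * ((2 * j : ℕ) : ℤ) = -2 * (j : ℤ) := by
        intro j _
        rw [pow_succ, pow_mul]
        push_cast
        ring
      rw [Finset.sum_congr rfl this]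
      have := sum_range_int m
      rw [hq]
      push_cast
      simp only [neg_mul]
      rw [Finset.sum_neg_distrib, ← Finset.mul_sum]
      omega
    rw [h1, h2]
    omega
  · rw [wB, Finset.sum_insert htX, hX, Finset.sum_image hinj, hte.neg_one_pow]
    have : ∀ j ∈ range m, (-1 : ℤ) ^ (2 * j) = 1 := by
      intro j _
      rw [pow_mul]
      norm_num
    rw [Finset.sum_congr rfl this, Finset.sum_const, Finset.card_range]
    simp [add_comm]
    exact hq.symm

lemma construct_neg (m : ℕ) (a : ℤ) (ha : Even (a - ((m : ℤ) + 1)))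
    (hge : ((m : ℤ) + 1) ^ 2 ≤ a) :
    ∃ S : Finset ℕ, S.card = m + 1 ∧ wA S = a ∧ wB S = -((m : ℤ) + 1) := by
  set q : ℤ := (m : ℤ) with hq
  set tz : ℤ := a - q * q with htz
  have hq0 : 0 ≤ q := Int.natCast_nonneg m
  have hsq : (q + 1) ^ 2 = q * q + 2 * q + 1 := by ring
  have htz2 : 2 * q + 1 ≤ tz := by omega
  have htznn : 0 ≤ tz := by omega
  have hOtz : Odd tz := by
    rcases ha with ⟨c, hc⟩
    rcases Int.even_mul_pred_self q with ⟨e, he⟩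
    have hqq : q * q = q * (q - 1) + q := by ring
    exact ⟨c - e, by omega⟩
  set t : ℕ := tz.toNat with htdef
  have htc : (t : ℤ) = tz := Int.toNat_of_nonneg htznn
  have hto : Odd t := by
    rw [← Int.odd_coe_nat, htc]
    exact hOtz
  have htm : 2 * m + 1 ≤ t := by omega
  set X : Finset ℕ := (range m).image (fun j => 2 * j + 1) with hX
  have htX : t ∉ X := by
    rw [hX]
    simp only [Finset.mem_image, Finset.mem_range]
    rintro ⟨j, hj, hj2⟩
    omega
  have hinj : ∀ x ∈ range m, ∀ y ∈ range m, 2 * x + 1 = 2 * y + 1 → x = y := by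
    intro x _ y _ h
    omega
  have hsumX : ∑ j ∈ range m, ((2 * j + 1 : ℕ) : ℤ) = q * q := by
    have h1 : ∀ j ∈ range m, ((2 * j + 1 : ℕ) : ℤ) = 2 * (j : ℤ) + 1 := by
      intro j _
      push_cast
      ring
    rw [Finset.sum_congr rfl h1, Finset.sum_add_distrib, Finset.sum_const, Finset.card_range,
      ← Finset.mul_sum, nsmul_eq_mul, mul_one]
    have hs := sum_range_int m
    have h2 : q * q = (m : ℤ) * ((m : ℤ) - 1) + (m : ℤ) := by
      rw [hq]
      ring
    omega
  refine ⟨insert t X, ?_, ?_, ?_⟩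
  · rw [Finset.card_insert_of_notMem htX, hX,
      Finset.card_image_of_injOn (fun x hx y hy h => hinj x hx y hy h), Finset.card_range]
  · rw [wA, Finset.sum_insert htX, hX, Finset.sum_image hinj]
    have h1 : (-1 : ℤ) ^ (t + 1) * (t : ℤ) = tz := by
      rw [pow_succ, hto.neg_one_pow, htc]
      ring
    have h2 : ∀ j ∈ range m, (-1 : ℤ) ^ (2 * j + 1 + 1) * ((2 * j + 1 : ℕ) : ℤ)
        = ((2 * j + 1 : ℕ) : ℤ) := by
      intro j _
      rw [show 2 * j + 1 + 1 = 2 * (j + 1) from by ring, pow_mul]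
      norm_num
    rw [h1, Finset.sum_congr rfl h2, hsumX]
    omega
  · rw [wB, Finset.sum_insert htX, hX, Finset.sum_image hinj, hto.neg_one_pow]
    have : ∀ j ∈ range m, (-1 : ℤ) ^ (2 * j + 1) = -1 := by
      intro j _
      rw [pow_succ, pow_mul]
      norm_num
    rw [Finset.sum_congr rfl this, Finset.sum_const, Finset.card_range]
    simp only [nsmul_eq_mul, mul_neg, mul_one, hq]
    ring

lemma neg_one_pow_two_mul (n : ℕ) : (-1 : ℤ) ^ (2 * n) = 1 := by
  rw [pow_mul]
  norm_num

lemma neg_one_pow_two_mul_add_one (n : ℕ) : (-1 : ℤ) ^ (2 * n + 1) = -1 := by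
  rw [pow_succ, neg_one_pow_two_mul]
  norm_num

lemma wAB_range2 (m : ℕ) : wA (range (2 * m)) = m ∧ wB (range (2 * m)) = 0 := by
  induction m with
  | zero => simp [wA, wB]
  | succ n ih =>
    obtain ⟨ihA, ihB⟩ := ih
    have e : 2 * (n + 1) = 2 * n + 1 + 1 := by ring
    rw [e]
    constructor
    · rw [wA] at ihA ⊢
      rw [Finset.sum_range_succ, Finset.sum_range_succ, ihA,
        show 2 * n + 1 + 1 = 2 * (n + 1) from by ring,
        neg_one_pow_two_mul, neg_one_pow_two_mul_add_one]
      push_cast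
      ring
    · rw [wB] at ihB ⊢
      rw [Finset.sum_range_succ, Finset.sum_range_succ, ihB,
        neg_one_pow_two_mul, neg_one_pow_two_mul_add_one]
      ring

lemma construct_zero (a : ℤ) : ∃ S : Finset ℕ, wA S = a ∧ wB S = 0 := by
  rcases le_or_gt 0 a with h | h
  · refine ⟨range (2 * a.toNat), ?_, (wAB_range2 a.toNat).2⟩
    rw [(wAB_range2 a.toNat).1, Int.toNat_of_nonneg h]
  · set m : ℕ := (-a).toNat with hm
    have hmc : (m : ℤ) = -a := Int.toNat_of_nonneg (by omega)
    refine ⟨(range (2 * m + 1)).erase 0, ?_, ?_⟩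
    · have h1 : wA (range (2 * m + 1)) = -(m : ℤ) := by
        rw [wA, Finset.sum_range_succ]
        have := (wAB_range2 m).1
        rw [wA] at this
        rw [this, neg_one_pow_two_mul_add_one]
        push_cast
        ring
      rw [wA] at h1 ⊢
      rw [← Finset.sum_erase_add (range (2 * m + 1)) _
        (Finset.mem_range.mpr (Nat.succ_pos _))] at h1
      simp only [Nat.cast_zero, mul_zero, add_zero] at h1
      rw [h1]
      omega
    · have h1 : wB (range (2 * m + 1)) = 1 := by
        rw [wB, Finset.sum_range_succ]
        have := (wAB_range2 m).2
        rw [wB] at this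
        rw [this, neg_one_pow_two_mul]
        ring
      rw [wB] at h1 ⊢
      rw [← Finset.sum_erase_add (range (2 * m + 1)) _
        (Finset.mem_range.mpr (Nat.succ_pos _))] at h1
      simp only [pow_zero] at h1
      omega

lemma lower_bound (a b : ℤ) (w : ℕ) (hw : w ∈ RepWeights a b) : b.natAbs ≤ w := by
  obtain ⟨S, hcard, hA, hB⟩ := (mem_repWeights a b w).mp hw
  have h := wB_abs_le S
  rw [hB, hcard, Int.abs_eq_natAbs] at h
  exact_mod_cast h

lemma sInf_eq_of_mem (a b : ℤ) (hmem : b.natAbs ∈ RepWeights a b) :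
    sInf (RepWeights a b) = b.natAbs :=
  le_antisymm (Nat.sInf_le hmem) (lower_bound a b _ (Nat.sInf_mem ⟨_, hmem⟩))

theorem stmt17 (a b : ℤ) :
    sInf (RepWeights a b) = b.natAbs ↔
      (a = 0 ∧ b = 0) ∨
      (0 < b ∧ Even a ∧ a ≤ -(b * (b - 1))) ∨
      (b < 0 ∧ Even (a + b) ∧ b ^ 2 ≤ a) := by
  constructor
  · intro h
    rcases Set.eq_empty_or_nonempty (RepWeights a b) with he | hne
    · exfalso
      have hb : b = 0 := by
        rw [he] at h
        simp only [Nat.sInf_empty] at h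
        omega
      obtain ⟨S, hA, hB⟩ := construct_zero a
      have : S.card ∈ RepWeights a b :=
        (mem_repWeights a b S.card).mpr ⟨S, rfl, hA, by rw [hB, hb]⟩
      rw [he] at this
      exact this
    · have hmem : b.natAbs ∈ RepWeights a b := h ▸ Nat.sInf_mem hne
      obtain ⟨S, hcard, hA, hB⟩ := (mem_repWeights _ _ _).mp hmem
      rcases lt_trichotomy b 0 with hb | hb | hb
      · right; right
        have hcast : (S.card : ℤ) = -b := by rw [hcard]; omega
        have hodd : ∀ i ∈ S, Odd i := all_odd_of_wB S (by rw [hB, hcast]; ring)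
        have hA' : wA S = ∑ i ∈ S, (i : ℤ) := wA_of_odd S hodd
        have hsum := odd_sum_ge S hodd
        have hc2 : ((∑ i ∈ S, i : ℕ) : ℤ) = ∑ i ∈ S, (i : ℤ) := Nat.cast_sum _ _
        have hc3 : ((S.card * S.card : ℕ) : ℤ) = (S.card : ℤ) * S.card := by push_cast; ring
        have hz : (S.card : ℤ) * S.card ≤ ∑ i ∈ S, (i : ℤ) := by
          rw [← hc2, ← hc3]
          exact_mod_cast hsum
        refine ⟨hb, ?_, ?_⟩
        · have heq : a + b = ∑ i ∈ S, ((i : ℤ) - 1) := by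
            rw [Finset.sum_sub_distrib, ← hA', hA, Finset.sum_const]
            simp only [nsmul_eq_mul, mul_one]
            omega
          rw [heq]
          refine Finset.even_sum _ fun i hi => ?_
          have := hodd i hi
          rcases this with ⟨c, hc⟩
          exact ⟨c, by push_cast [hc]; ring⟩
        · have : b ^ 2 = (S.card : ℤ) * S.card := by rw [hcast]; ring
          rw [this, ← hA, hA']
          exact hz
      · left
        subst hb
        have hS : S = ∅ := Finset.card_eq_zero.mp (by simpa using hcard)
        refine ⟨?_, rfl⟩
        rw [← hA, hS]
        simp [wA]
      · right; left
        have hcast : (S.card : ℤ) = b := by rw [hcard]; omega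
        have heven : ∀ i ∈ S, Even i := all_even_of_wB S (by rw [hB, hcast])
        have hA' : wA S = -∑ i ∈ S, (i : ℤ) := wA_of_even S heven
        have hsum := even_sum_ge S heven
        have hc1 : 1 ≤ S.card := by omega
        have hz : (S.card : ℤ) * ((S.card : ℤ) - 1) ≤ ∑ i ∈ S, (i : ℤ) := by
          have := (Nat.cast_le (α := ℤ)).mpr hsum
          rw [Nat.cast_sum] at this
          push_cast [Nat.cast_sub hc1] at this
          convert this using 1
        refine ⟨hb, ?_, ?_⟩
        · have : Even (∑ i ∈ S, (i : ℤ)) := by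
            refine Finset.even_sum _ fun i hi => ?_
            rcases heven i hi with ⟨c, hc⟩
            exact ⟨c, by push_cast [hc]; ring⟩
          rw [← hA, hA']
          exact this.neg
        · have hb2 : b * (b - 1) = (S.card : ℤ) * ((S.card : ℤ) - 1) := by rw [hcast]
          rw [← hA, hA', hb2]
          omega
  · rintro (⟨ha, hb⟩ | ⟨hb, ha, hle⟩ | ⟨hb, ha, hge⟩)
    · subst ha; subst hb
      have hmem : (0 : ℕ) ∈ RepWeights 0 0 :=
        (mem_repWeights 0 0 0).mpr ⟨∅, rfl, by simp [wA], by simp [wB]⟩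
      simpa using sInf_eq_of_mem 0 0 (by simpa using hmem)
    · set m : ℕ := b.toNat - 1 with hm
      have hmc : (m : ℤ) = b - 1 := by omega
      have hle' : a ≤ -(((m : ℤ) + 1) * m) := by
        have : ((m : ℤ) + 1) * m = b * (b - 1) := by rw [hmc]; ring
        omega
      obtain ⟨S, hcS, hAS, hBS⟩ := construct_pos m a ha hle'
      have hmem : b.natAbs ∈ RepWeights a b := by
        refine (mem_repWeights a b _).mpr ⟨S, ?_, hAS, ?_⟩
        · rw [hcS]; omega
        · rw [hBS]; omega
      exact sInf_eq_of_mem a b hmem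
    · set m : ℕ := (-b).toNat - 1 with hm
      have hmc : (m : ℤ) = -b - 1 := by omega
      have ha' : Even (a - ((m : ℤ) + 1)) := by
        have : a - ((m : ℤ) + 1) = a + b := by omega
        rw [this]
        exact ha
      have hge' : ((m : ℤ) + 1) ^ 2 ≤ a := by
        have : ((m : ℤ) + 1) ^ 2 = b ^ 2 := by rw [hmc]; ring
        omega
      obtain ⟨S, hcS, hAS, hBS⟩ := construct_neg m a ha' hge'
      have hmem : b.natAbs ∈ RepWeights a b := by
        refine (mem_repWeights a b _).mpr ⟨S, ?_, hAS, ?_⟩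
        · rw [hcS]; omega
        · rw [hBS]; omega
      exact sInf_eq_of_mem a b hmem
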